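/- In a metabelian group G, for all x, y, z ∈ G and all n ≥ 1: [xy, z, z, …, z] (n copies of z) = [x,ₙ z]·[x,ₙ z, y]·[y,ₙ z], where [a,ₙ b] denotes the n-fold iterated commutator [...[[a,b],b],...,b]. -/

import Mathlib

/-- The paper's commutator convention: [a,b] = a⁻¹ b⁻¹ a b. -/
def pc {G : Type*} [Group G] (a b : G) : G := a⁻¹ * b⁻¹ * a * b

/-- The iterated commutator [a,ₙ b]: [a,₁ b] = [a,b], [a,ₖ₊₁ b] = [[a,ₖ b], b]. -/
def pcIter {G : Type*} [Group G] (a b : G) : ℕ → G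
  | 0 => a
  | n + 1 => pc (pcIter a b n) b

open scoped commutatorElement in
lemma pc_mem {G : Type*} [Group G] (a b : G) : pc a b ∈ commutator G := by
  have h : pc a b = ⁅a⁻¹, b⁻¹⁆ := by
    simp [pc, commutatorElement_def]
  rw [h, commutator_def]
  exact Subgroup.commutator_mem_commutator (Subgroup.mem_top _) (Subgroup.mem_top _)

lemma pcIter_mem {G : Type*} [Group G] (a b : G) (n : ℕ) (hn : 1 ≤ n) :
    pcIter a b n ∈ commutator G := by
  obtain ⟨m, rfl⟩ : ∃ m, n = m + 1 := ⟨n - 1, by omega⟩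
  show pc (pcIter a b m) b ∈ commutator G
  exact pc_mem _ _

/-- If c and w commute then [c,w] = 1. -/
lemma pc_eq_one {G : Type*} [Group G] {c w : G} (h : c * w = w * c) : pc c w = 1 := by
  have h' : Commute c w := h
  have h2 : w⁻¹ * c = c * w⁻¹ := h'.inv_right.eq.symm
  calc pc c w = c⁻¹ * (w⁻¹ * c) * w := by simp [pc, mul_assoc]
    _ = c⁻¹ * (c * w⁻¹) * w := by rw [h2]
    _ = 1 := by group

/-- pure identity: [uv, z] = v⁻¹ [u,z] v · [v,z]. -/
lemma pc_mul_left {G : Type*} [Group G] (u v z : G) :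
    pc (u * v) z = v⁻¹ * pc u z * v * pc v z := by
  simp [pc]; group

/-- pure identity: c^v = c · [c,v]. -/
lemma conj_eq {G : Type*} [Group G] (c v : G) :
    v⁻¹ * c * v = c * pc c v := by
  simp [pc]; group

/-- On G' (abelian), u ↦ [u,z] is multiplicative. -/
lemma pc_hom {G : Type*} [Group G]
    (hmet : ∀ a ∈ commutator G, ∀ b ∈ commutator G, a * b = b * a)
    (u v z : G) (hu : u ∈ commutator G) (hv : v ∈ commutator G) :
    pc (u * v) z = pc u z * pc v z := by
  rw [pc_mul_left, conj_eq]
  rw [pc_eq_one (hmet _ (pc_mem u z) _ hv)]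
  group

/-- pure identity: [a, yz] = [a,z] · ([a,y])^z. -/
lemma pc_split {G : Type*} [Group G] (a y z : G) :
    pc a (y * z) = pc a z * (z⁻¹ * pc a y * z) := by
  simp [pc]; group

lemma pc_comm_arg {G : Type*} [Group G]
    (hmet : ∀ a ∈ commutator G, ∀ b ∈ commutator G, a * b = b * a)
    (a y z : G) (ha : a ∈ commutator G) :
    pc a (y * z) = pc a (z * y) := by
  have key : y * z = (z * y) * pc y z := by simp [pc]; group
  rw [key, pc_split]
  rw [pc_eq_one (hmet _ ha _ (pc_mem y z)), conj_eq]
  rw [pc_eq_one (hmet _ (pc_mem a (z * y)) _ (pc_mem y z))]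
  group

/-- key swap: for a ∈ G', [a,y,z] = [a,z,y]. -/
lemma pc_swap {G : Type*} [Group G]
    (hmet : ∀ a ∈ commutator G, ∀ b ∈ commutator G, a * b = b * a)
    (a y z : G) (ha : a ∈ commutator G) :
    pc (pc a y) z = pc (pc a z) y := by
  have e1 : pc a (y * z) = pc a z * pc a y * pc (pc a y) z := by
    rw [pc_split, conj_eq]; group
  have e2 : pc a (z * y) = pc a y * pc a z * pc (pc a z) y := by
    rw [pc_split, conj_eq]; group
  have e3 := pc_comm_arg hmet a y z ha
  have e4 : pc a y * pc a z = pc a z * pc a y :=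
    hmet _ (pc_mem a y) _ (pc_mem a z)
  have h5 : pc a z * pc a y * pc (pc a y) z = pc a z * pc a y * pc (pc a z) y := by
    rw [← e1, e3, e2, e4]
  rw [mul_assoc, mul_assoc] at h5
  exact mul_left_cancel (mul_left_cancel h5)

/-- In a metabelian group, for all x, y, z and n ≥ 1,
[xy,ₙ z] = [x,ₙ z]·[x,ₙ z, y]·[y,ₙ z]. -/
theorem stmt_16 {G : Type*} [Group G]
    (hmet : ∀ a ∈ commutator G, ∀ b ∈ commutator G, a * b = b * a) :
    ∀ (x y z : G) (n : ℕ), 1 ≤ n →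
      pcIter (x * y) z n =
        pcIter x z n * pc (pcIter x z n) y * pcIter y z n := by
  intro x y z n hn
  induction n with
  | zero => omega
  | succ n ih =>
    rcases Nat.eq_or_lt_of_le hn with h1 | h1
    · have hn0 : n = 0 := by omega
      subst hn0
      show pc (x * y) z = pc x z * pc (pc x z) y * pc y z
      rw [pc_mul_left, conj_eq]
    · have hn' : 1 ≤ n := by omega
      have ihn := ih hn'
      set A := pcIter x z n with hA
      set B := pcIter y z n with hB
      have hAmem : A ∈ commutator G := pcIter_mem x z n hn'
      have hBmem : B ∈ commutator G := pcIter_mem y z n hn'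
      show pc (pcIter (x * y) z n) z = pc A z * pc (pc A z) y * pc B z
      rw [ihn]
      rw [pc_hom hmet (A * pc A y) B z
        ((commutator G).mul_mem hAmem (pc_mem A y)) hBmem]
      rw [pc_hom hmet A (pc A y) z hAmem (pc_mem A y)]
      rw [pc_swap hmet A y z hAmem]
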